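/- Let A, B, C be bounded operators on a Hilbert space with AC = CA = 0 and ABA = 0, and let G := A + τ^{1/2}B + τC for τ ∈ (0,1). Then for every n ≥ 2, G^n = A^n + τ^{1/2}(BA^{n−1} + A^{n−1}B) + [n ≥ 3]·τ·B A^{n−2} B + τ·Σ_{j=0}^{n−2} A^j B² A^{n−2−j} + τ^{3/2} D_n, where D_n is a bounded operator with ‖D_n‖ ≤ 3ⁿ cⁿ for c := max(‖A‖, ‖B‖, ‖C‖, 1). -/

import Mathlib

open scoped ComplexOrder

set_option maxHeartbeats 1000000

private lemma ite_smul_aux {M : Type*} [AddCommMonoid M] [Module ℝ M]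
    (P : Prop) [Decidable P] (τ : ℝ) (x : M) :
    (if P then τ else 0) • x = τ • (if P then x else 0) := by
  split_ifs <;> simp

private lemma pow3_aux : ∀ k : ℕ, (k + 4 : ℝ) ≤ 3 ^ (k + 2) := by
  intro k
  induction k with
  | zero => norm_num
  | succ n ih =>
      have h : (3 : ℝ) ^ (n + 1 + 2) = 3 * 3 ^ (n + 2) := by ring
      rw [h]
      push_cast at ih ⊢
      nlinarith

/-- Key operator-expansion estimate: if `A`, `B`, `C` are bounded operators on a
Hilbert space with `AC = CA = 0` and `ABA = 0`, and `G = A + √τ·B + τ·C` with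
`τ ∈ (0,1)`, then for every `n ≥ 2`,
`Gⁿ = Aⁿ + √τ(BA^{n−1} + A^{n−1}B) + [n ≥ 3]·τ·BA^{n−2}B
      + τ·∑_{j=0}^{n−2} Aʲ B² A^{n−2−j} + τ^{3/2} Dₙ`
with `‖Dₙ‖ ≤ 3ⁿ cⁿ` where `c = max(‖A‖, ‖B‖, ‖C‖, 1)`. -/
theorem operator_expansion_estimate {H : Type*} [NormedAddCommGroup H]
    [InnerProductSpace ℂ H] [CompleteSpace H]
    (A B C : H →L[ℂ] H) (hAC : A * C = 0) (hCA : C * A = 0) (hABA : A * B * A = 0)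
    (τ : ℝ) (hτ : τ ∈ Set.Ioo (0 : ℝ) 1) :
    ∀ n : ℕ, 2 ≤ n → ∃ D : H →L[ℂ] H,
      (A + Real.sqrt τ • B + τ • C) ^ n =
        A ^ n + Real.sqrt τ • (B * A ^ (n - 1) + A ^ (n - 1) * B) +
          (if 3 ≤ n then τ else 0) • (B * A ^ (n - 2) * B) +
          τ • (∑ j ∈ Finset.range (n - 1), A ^ j * B ^ 2 * A ^ (n - 2 - j)) +
          (τ * Real.sqrt τ) • D ∧
      ‖D‖ ≤ 3 ^ n * max (max ‖A‖ ‖B‖) (max ‖C‖ 1) ^ n := by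
  obtain ⟨hτ0, hτ1⟩ := hτ
  set c : ℝ := max (max ‖A‖ ‖B‖) (max ‖C‖ 1) with hc
  have hA : ‖A‖ ≤ c := le_trans (le_max_left _ _) (le_max_left _ _)
  have hB : ‖B‖ ≤ c := le_trans (le_max_right _ _) (le_max_left _ _)
  have hCn : ‖C‖ ≤ c := le_trans (le_max_left _ _) (le_max_right _ _)
  have hc1 : (1 : ℝ) ≤ c := le_trans (le_max_right _ _) (le_max_right _ _)
  have hc0 : (0 : ℝ) ≤ c := by linarith
  set s : ℝ := Real.sqrt τ with hs
  have hs0 : 0 ≤ s := Real.sqrt_nonneg τ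
  have hs1 : s ≤ 1 := by
    rw [hs, show (1 : ℝ) = Real.sqrt 1 by simp]
    exact Real.sqrt_le_sqrt hτ1.le
  have hss : s * s = τ := Real.mul_self_sqrt hτ0.le
  -- norms of powers
  have hpow : ∀ j : ℕ, ‖A ^ j‖ ≤ c ^ j := by
    intro j
    induction j with
    | zero =>
        rw [pow_zero, pow_zero, ContinuousLinearMap.one_def]
        exact ContinuousLinearMap.norm_id_le
    | succ i ihp =>
        rw [pow_succ, pow_succ]
        exact le_trans (norm_mul_le _ _)
          (mul_le_mul ihp hA (norm_nonneg A) (pow_nonneg hc0 i))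
  -- norm of G
  have hGnorm : ‖A + s • B + τ • C‖ ≤ 3 * c := by
    have h1 : ‖s • B‖ ≤ c := by
      rw [norm_smul, Real.norm_eq_abs, abs_of_nonneg hs0]
      nlinarith [mul_le_mul_of_nonneg_right hs1 (norm_nonneg B), norm_nonneg B]
    have h2 : ‖τ • C‖ ≤ c := by
      rw [norm_smul, Real.norm_eq_abs, abs_of_nonneg hτ0.le]
      nlinarith [mul_le_mul_of_nonneg_right hτ1.le (norm_nonneg C), norm_nonneg C]
    calc ‖A + s • B + τ • C‖ ≤ ‖A + s • B‖ + ‖τ • C‖ := norm_add_le _ _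
      _ ≤ (‖A‖ + ‖s • B‖) + ‖τ • C‖ := by
          exact add_le_add_left (norm_add_le _ _) _
      _ ≤ 3 * c := by linarith
  -- zero lemmas
  have zAC : ∀ k : ℕ, A ^ (k + 1) * C = 0 := by
    intro k
    rw [pow_succ, mul_assoc, hAC, mul_zero]
  have zABA : ∀ k : ℕ, A ^ (k + 1) * B * A = 0 := by
    intro k
    rw [pow_succ, mul_assoc (A ^ k) A B, mul_assoc (A ^ k) (A * B) A, hABA, mul_zero]
  -- key induction
  have key : ∀ m : ℕ, ∃ D : H →L[ℂ] H,
      (A + s • B + τ • C) ^ (m + 2) =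
        A ^ (m + 2) + s • (B * A ^ (m + 1) + A ^ (m + 1) * B) +
          τ • (if 3 ≤ m + 2 then B * A ^ m * B else 0) +
          τ • (∑ j ∈ Finset.range (m + 1), A ^ j * B ^ 2 * A ^ (m - j)) +
          (τ * s) • D ∧
        ‖D‖ ≤ (3 ^ (m + 2) - (m + 4)) * c ^ (m + 2) := by
    intro m
    induction m with
    | zero =>
        refine ⟨B * C + C * B + s • (C * C), ?_, ?_⟩
        · rw [if_neg (by norm_num), Finset.sum_range_one]
          simp only [zero_add, Nat.sub_self, pow_zero, pow_one, one_mul, mul_one,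
            smul_zero, add_zero]
          rw [pow_two]
          simp only [mul_add, add_mul, smul_mul_assoc, mul_smul_comm, smul_smul,
            hAC, hCA, smul_zero, add_zero, zero_add, pow_two]
          rw [← hss]
          module
        · have h1 : ‖B * C‖ ≤ c * c :=
            le_trans (norm_mul_le _ _) (mul_le_mul hB hCn (norm_nonneg C) hc0)
          have h2 : ‖C * B‖ ≤ c * c :=
            le_trans (norm_mul_le _ _) (mul_le_mul hCn hB (norm_nonneg B) hc0)
          have h3 : ‖s • (C * C)‖ ≤ c * c := by
            rw [norm_smul, Real.norm_eq_abs, abs_of_nonneg hs0]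
            have h4 : ‖C * C‖ ≤ c * c :=
              le_trans (norm_mul_le _ _) (mul_le_mul hCn hCn (norm_nonneg C) hc0)
            nlinarith [norm_nonneg (C * C)]
          have ht : ‖B * C + C * B + s • (C * C)‖ ≤ c * c + c * c + c * c := by
            calc ‖B * C + C * B + s • (C * C)‖
                ≤ ‖B * C + C * B‖ + ‖s • (C * C)‖ := norm_add_le _ _
              _ ≤ (‖B * C‖ + ‖C * B‖) + ‖s • (C * C)‖ :=
                  add_le_add_left (norm_add_le _ _) _
              _ ≤ c * c + c * c + c * c := by linarith
          push_cast
          norm_num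
          nlinarith [ht, sq_nonneg c, hc0]
    | succ k ih =>
        set X : H →L[ℂ] H := B * A ^ (k + 1) + A ^ (k + 1) * B with hX
        set Y : H →L[ℂ] H := if 3 ≤ k + 2 then B * A ^ k * B else 0 with hY
        set S : H →L[ℂ] H := ∑ j ∈ Finset.range (k + 1), A ^ j * B ^ 2 * A ^ (k - j) with hS
        obtain ⟨D, hGn, hDn⟩ := ih
        refine ⟨A ^ (k + 1) * B * C + Y * B + s • (Y * C) + S * B + s • (S * C) +
          (D * A + s • (D * B) + τ • (D * C)), ?_, ?_⟩
        · -- facts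
          have f1 : A ^ (k + 2) * A = A ^ (k + 3) := (pow_succ A (k + 2)).symm
          have f2 : A ^ (k + 2) * C = 0 := zAC (k + 1)
          have f3 : X * A = B * A ^ (k + 2) := by
            rw [hX, add_mul, zABA k, add_zero, mul_assoc, ← pow_succ]
          have f4 : X * B = B * A ^ (k + 1) * B + A ^ (k + 1) * B ^ 2 := by
            rw [hX, add_mul, mul_assoc (A ^ (k + 1)) B B, ← pow_two]
          have f5 : X * C = A ^ (k + 1) * B * C := by
            rw [hX, add_mul, mul_assoc B, zAC k, mul_zero, zero_add, mul_assoc,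
              ← mul_assoc]
          have f6 : Y * A = 0 := by
            rw [hY]
            split_ifs with h
            · obtain ⟨k', rfl⟩ : ∃ k', k = k' + 1 := ⟨k - 1, by omega⟩
              rw [mul_assoc B (A ^ (k' + 1)) B, mul_assoc B (A ^ (k' + 1) * B) A,
                zABA k', mul_zero]
            · exact zero_mul _
          have f7 : S * A = ∑ j ∈ Finset.range (k + 1), A ^ j * B ^ 2 * A ^ (k + 1 - j) := by
            rw [hS, Finset.sum_mul]
            refine Finset.sum_congr rfl fun j hj => ?_
            have hj' : j < k + 1 := Finset.mem_range.mp hj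
            rw [mul_assoc, ← pow_succ]
            congr 2
            omega
          have e1 : k + 1 + 2 = (k + 2) + 1 := rfl
          rw [e1, pow_succ, hGn, if_pos (by omega : 3 ≤ k + 1 + 2)]
          rw [show k + 1 + 2 = k + 3 from rfl, show k + 1 + 1 = k + 2 from rfl]
          rw [Finset.sum_range_succ, Nat.sub_self, pow_zero, mul_one]
          simp only [add_mul, mul_add, smul_mul_assoc, mul_smul_comm, smul_smul]
          rw [f1, f2, f3, f4, f5, f6, f7]
          simp only [smul_zero, add_zero, zero_add]
          rw [← hss]
          module
        · -- norms
          have nY : ‖Y‖ ≤ c ^ (k + 2) := by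
            rw [hY]
            split_ifs with h
            · calc ‖B * A ^ k * B‖ ≤ ‖B * A ^ k‖ * ‖B‖ := norm_mul_le _ _
                _ ≤ (‖B‖ * ‖A ^ k‖) * ‖B‖ :=
                    mul_le_mul_of_nonneg_right (norm_mul_le _ _) (norm_nonneg B)
                _ ≤ (c * c ^ k) * c :=
                    mul_le_mul (mul_le_mul hB (hpow k) (norm_nonneg _) hc0) hB
                      (norm_nonneg _) (mul_nonneg hc0 (pow_nonneg hc0 _))
                _ = c ^ (k + 2) := by ring
            · simp [pow_nonneg hc0]
          have nS : ‖S‖ ≤ (k + 1) * c ^ (k + 2) := by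
            rw [hS]
            calc ‖∑ j ∈ Finset.range (k + 1), A ^ j * B ^ 2 * A ^ (k - j)‖
                ≤ ∑ j ∈ Finset.range (k + 1), ‖A ^ j * B ^ 2 * A ^ (k - j)‖ :=
                  norm_sum_le _ _
              _ ≤ ∑ j ∈ Finset.range (k + 1), c ^ (k + 2) := by
                  refine Finset.sum_le_sum fun j hj => ?_
                  have hj' : j < k + 1 := Finset.mem_range.mp hj
                  have t1 : ‖A ^ j * B ^ 2 * A ^ (k - j)‖ ≤
                      c ^ j * (c * c) * c ^ (k - j) := by
                    have hb2 : ‖B ^ 2‖ ≤ c * c := by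
                      rw [pow_two]
                      exact le_trans (norm_mul_le _ _)
                        (mul_le_mul hB hB (norm_nonneg B) hc0)
                    calc ‖A ^ j * B ^ 2 * A ^ (k - j)‖
                        ≤ ‖A ^ j * B ^ 2‖ * ‖A ^ (k - j)‖ := norm_mul_le _ _
                      _ ≤ (‖A ^ j‖ * ‖B ^ 2‖) * ‖A ^ (k - j)‖ :=
                          mul_le_mul_of_nonneg_right (norm_mul_le _ _) (norm_nonneg _)
                      _ ≤ (c ^ j * (c * c)) * c ^ (k - j) :=
                          mul_le_mul
                            (mul_le_mul (hpow j) hb2 (norm_nonneg _) (pow_nonneg hc0 _))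
                            (hpow (k - j)) (norm_nonneg _)
                            (mul_nonneg (pow_nonneg hc0 _) (mul_nonneg hc0 hc0))
                  have t2 : c ^ j * (c * c) * c ^ (k - j) = c ^ (k + 2) := by
                    rw [show c * c = c ^ 2 by ring, ← pow_add, ← pow_add]
                    congr 1
                    omega
                  linarith [t1, t2.symm.le, t2 ▸ t1]
              _ = (k + 1) * c ^ (k + 2) := by
                  rw [Finset.sum_const, Finset.card_range, nsmul_eq_mul]
                  push_cast
                  ring
          have cpos : (0:ℝ) ≤ c ^ (k + 3) := pow_nonneg hc0 _
          have n1 : ‖A ^ (k + 1) * B * C‖ ≤ c ^ (k + 3) := by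
            calc ‖A ^ (k + 1) * B * C‖ ≤ ‖A ^ (k + 1) * B‖ * ‖C‖ := norm_mul_le _ _
              _ ≤ (‖A ^ (k + 1)‖ * ‖B‖) * ‖C‖ :=
                  mul_le_mul_of_nonneg_right (norm_mul_le _ _) (norm_nonneg _)
              _ ≤ (c ^ (k + 1) * c) * c :=
                  mul_le_mul
                    (mul_le_mul (hpow (k + 1)) hB (norm_nonneg _) (pow_nonneg hc0 _))
                    hCn (norm_nonneg _) (mul_nonneg (pow_nonneg hc0 _) hc0)
              _ = c ^ (k + 3) := by ring
          have n2 : ‖Y * B‖ ≤ c ^ (k + 3) := by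
            calc ‖Y * B‖ ≤ ‖Y‖ * ‖B‖ := norm_mul_le _ _
              _ ≤ c ^ (k + 2) * c :=
                  mul_le_mul nY hB (norm_nonneg _) (pow_nonneg hc0 _)
              _ = c ^ (k + 3) := by ring
          have n3 : ‖s • (Y * C)‖ ≤ c ^ (k + 3) := by
            rw [norm_smul, Real.norm_eq_abs, abs_of_nonneg hs0]
            have h1 : ‖Y * C‖ ≤ c ^ (k + 3) := by
              calc ‖Y * C‖ ≤ ‖Y‖ * ‖C‖ := norm_mul_le _ _
                _ ≤ c ^ (k + 2) * c :=
                    mul_le_mul nY hCn (norm_nonneg _) (pow_nonneg hc0 _)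
                _ = c ^ (k + 3) := by ring
            have h2 : s * ‖Y * C‖ ≤ 1 * c ^ (k + 3) :=
              mul_le_mul hs1 h1 (norm_nonneg _) zero_le_one
            linarith
          have n4 : ‖S * B‖ ≤ (k + 1) * c ^ (k + 3) := by
            calc ‖S * B‖ ≤ ‖S‖ * ‖B‖ := norm_mul_le _ _
              _ ≤ ((k + 1) * c ^ (k + 2)) * c :=
                  mul_le_mul nS hB (norm_nonneg _)
                    (mul_nonneg (by positivity) (pow_nonneg hc0 _))
              _ = (k + 1) * c ^ (k + 3) := by ring
          have n5 : ‖s • (S * C)‖ ≤ (k + 1) * c ^ (k + 3) := by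
            rw [norm_smul, Real.norm_eq_abs, abs_of_nonneg hs0]
            have h1 : ‖S * C‖ ≤ (k + 1) * c ^ (k + 3) := by
              calc ‖S * C‖ ≤ ‖S‖ * ‖C‖ := norm_mul_le _ _
                _ ≤ ((k + 1) * c ^ (k + 2)) * c :=
                    mul_le_mul nS hCn (norm_nonneg _)
                      (mul_nonneg (by positivity) (pow_nonneg hc0 _))
                _ = (k + 1) * c ^ (k + 3) := by ring
            have h2 : s * ‖S * C‖ ≤ 1 * ((k + 1) * c ^ (k + 3)) :=
              mul_le_mul hs1 h1 (norm_nonneg _) zero_le_one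
            linarith
          have n6 : ‖D * A + s • (D * B) + τ • (D * C)‖ ≤
              3 * (3 ^ (k + 2) - (k + 4)) * c ^ (k + 3) := by
            have heq : D * A + s • (D * B) + τ • (D * C) = D * (A + s • B + τ • C) := by
              simp only [mul_add, mul_smul_comm]
            rw [heq]
            have hK : (0:ℝ) ≤ 3 ^ (k + 2) - (k + 4) := by
              have := pow3_aux k
              linarith
            calc ‖D * (A + s • B + τ • C)‖ ≤ ‖D‖ * ‖A + s • B + τ • C‖ := norm_mul_le _ _
              _ ≤ ((3 ^ (k + 2) - (k + 4)) * c ^ (k + 2)) * (3 * c) :=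
                  mul_le_mul hDn hGnorm (norm_nonneg _)
                    (mul_nonneg hK (pow_nonneg hc0 _))
              _ = 3 * (3 ^ (k + 2) - (k + 4)) * c ^ (k + 3) := by ring
          have coeff : (1 : ℝ) + 1 + 1 + ((k:ℝ) + 1) + ((k:ℝ) + 1) +
              3 * (3 ^ (k + 2) - ((k:ℝ) + 4)) ≤ 3 ^ (k + 1 + 2) - (((k+1:ℕ):ℝ) + 4) := by
            have h : (3 : ℝ) ^ (k + 1 + 2) = 3 * 3 ^ (k + 2) := by ring
            rw [h]
            push_cast
            linarith
          calc ‖A ^ (k + 1) * B * C + Y * B + s • (Y * C) + S * B + s • (S * C) +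
                (D * A + s • (D * B) + τ • (D * C))‖
              ≤ ‖A ^ (k + 1) * B * C + Y * B + s • (Y * C) + S * B + s • (S * C)‖ +
                ‖D * A + s • (D * B) + τ • (D * C)‖ := norm_add_le _ _
            _ ≤ ‖A ^ (k + 1) * B * C + Y * B + s • (Y * C) + S * B‖ + ‖s • (S * C)‖ +
                ‖D * A + s • (D * B) + τ • (D * C)‖ := by
                have := norm_add_le
                  (A ^ (k + 1) * B * C + Y * B + s • (Y * C) + S * B) (s • (S * C))
                linarith
            _ ≤ ‖A ^ (k + 1) * B * C + Y * B + s • (Y * C)‖ + ‖S * B‖ + ‖s • (S * C)‖ +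
                ‖D * A + s • (D * B) + τ • (D * C)‖ := by
                have := norm_add_le (A ^ (k + 1) * B * C + Y * B + s • (Y * C)) (S * B)
                linarith
            _ ≤ ‖A ^ (k + 1) * B * C + Y * B‖ + ‖s • (Y * C)‖ + ‖S * B‖ + ‖s • (S * C)‖ +
                ‖D * A + s • (D * B) + τ • (D * C)‖ := by
                have := norm_add_le (A ^ (k + 1) * B * C + Y * B) (s • (Y * C))
                linarith
            _ ≤ ‖A ^ (k + 1) * B * C‖ + ‖Y * B‖ + ‖s • (Y * C)‖ + ‖S * B‖ + ‖s • (S * C)‖ +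
                ‖D * A + s • (D * B) + τ • (D * C)‖ := by
                have := norm_add_le (A ^ (k + 1) * B * C) (Y * B)
                linarith
            _ ≤ c ^ (k + 3) + c ^ (k + 3) + c ^ (k + 3) + ((k:ℝ) + 1) * c ^ (k + 3) +
                ((k:ℝ) + 1) * c ^ (k + 3) + 3 * (3 ^ (k + 2) - ((k:ℝ) + 4)) * c ^ (k + 3) := by
                linarith
            _ = ((1 : ℝ) + 1 + 1 + ((k:ℝ) + 1) + ((k:ℝ) + 1) +
                3 * (3 ^ (k + 2) - ((k:ℝ) + 4))) * c ^ (k + 3) := by ring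
            _ ≤ (3 ^ (k + 1 + 2) - (((k+1:ℕ):ℝ) + 4)) * c ^ (k + 3) :=
                mul_le_mul_of_nonneg_right coeff cpos
  -- conclude
  intro n hn
  obtain ⟨m, rfl⟩ : ∃ m, n = m + 2 := ⟨n - 2, by omega⟩
  obtain ⟨D, hD1, hD2⟩ := key m
  refine ⟨D, ?_, ?_⟩
  · rw [ite_smul_aux]
    exact hD1
  · have h1 : (3 : ℝ) ^ (m + 2) - (m + 4) ≤ 3 ^ (m + 2) := by
      have : (0:ℝ) ≤ (m:ℝ) + 4 := by positivity
      linarith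
    calc ‖D‖ ≤ (3 ^ (m + 2) - (m + 4)) * c ^ (m + 2) := hD2
      _ ≤ 3 ^ (m + 2) * c ^ (m + 2) :=
          mul_le_mul_of_nonneg_right h1 (pow_nonneg hc0 _)
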